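/- The balancing stage does not alter the number of tours and still covers every trip exactly once: let t 1, …, t K be pairwise disjoint lists of trips, each without repeated entries and of length at least 2, and let σ be any permutation of {1, …, K}. Define the new tour u k as the stripped tour t k (t k with its last entry removed) followed by the last entry of t (σ k). Then the K new tours u 1, …, u K are nonempty, pairwise disjoint, and the set of trips appearing in u 1, …, u K equals the set of trips appearing in t 1, …, t K. -/

import Mathlib

/-- The balancing stage does not alter the number of tours and still covers
every trip exactly once: given pairwise disjoint duplicate-free tours of length
at least 2 and a permutation `σ`, the new tours (stripped tour `t k` followed by
the last entry of `t (σ k)`) are nonempty, pairwise disjoint, and cover exactly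
the same set of trips. -/
theorem balancing_preserves_cover {ι : Type*} {K : ℕ} (t : Fin K → List ι)
    (hdisj : ∀ k k' : Fin K, k ≠ k' → (t k).Disjoint (t k'))
    (hnodup : ∀ k, (t k).Nodup)
    (hlen : ∀ k, 2 ≤ (t k).length)
    (σ : Equiv.Perm (Fin K))
    (u : Fin K → List ι)
    (hu : ∀ k, u k = (t k).dropLast ++
      [(t (σ k)).getLast (by have := hlen (σ k); simp only [← List.length_pos_iff]; omega)]) :
    (∀ k, u k ≠ []) ∧
      (∀ k k' : Fin K, k ≠ k' → (u k).Disjoint (u k')) ∧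
      {x : ι | ∃ k, x ∈ u k} = {x : ι | ∃ k, x ∈ t k} := by
  have hne : ∀ k, t k ≠ [] := by
    intro k h; have := hlen k; rw [h] at this; simp at this
  have hdl : ∀ (j : Fin K) (y : ι), y ∈ (t j).dropLast → y ∈ t j :=
    fun j y h => List.mem_of_mem_dropLast h
  have hlastnot : ∀ k, (t k).getLast (hne k) ∉ (t k).dropLast := by
    intro k h
    have hd := hnodup k
    rw [← List.dropLast_append_getLast (hne k), List.nodup_append] at hd
    exact hd.2.2 _ h _ (by simp) rfl
  refine ⟨?_, ?_, ?_⟩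
  · intro k; rw [hu k]; simp
  · intro k k' hkk' x hxk hxk'
    rw [hu k] at hxk; rw [hu k'] at hxk'
    simp only [List.mem_append, List.mem_singleton] at hxk hxk'
    rcases hxk with h1 | h1 <;> rcases hxk' with h2 | h2
    · exact hdisj k k' hkk' (hdl _ _ h1) (hdl _ _ h2)
    · subst h2
      by_cases hc : σ k' = k
      · rw [← hc] at h1; exact hlastnot _ h1
      · exact hdisj (σ k') k hc (List.getLast_mem _) (hdl _ _ h1)
    · subst h1
      by_cases hc : σ k = k'
      · rw [← hc] at h2; exact hlastnot _ h2
      · exact hdisj (σ k) k' hc (List.getLast_mem _) (hdl _ _ h2)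
    · subst h1
      exact hdisj (σ k) (σ k') (fun h => hkk' (σ.injective h))
        (List.getLast_mem _) (by rw [h2]; exact List.getLast_mem _)
  · ext x
    simp only [Set.mem_setOf_eq]
    constructor
    · rintro ⟨k, hx⟩
      rw [hu k] at hx
      rcases List.mem_append.1 hx with h | h
      · exact ⟨k, hdl _ _ h⟩
      · rw [List.mem_singleton] at h
        exact ⟨σ k, h ▸ List.getLast_mem _⟩
    · rintro ⟨k, hx⟩
      rw [← List.dropLast_append_getLast (hne k)] at hx
      rcases List.mem_append.1 hx with h | h
      · exact ⟨k, by rw [hu k]; exact List.mem_append_left _ h⟩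
      · refine ⟨σ.symm k, ?_⟩
        rw [hu]
        apply List.mem_append_right
        rw [List.mem_singleton] at h ⊢
        rw [h]
        congr 1
        · rw [Equiv.apply_symm_apply]
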